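/- For every fixed integer n ≥ 1, the quantity S(n,D)/D^{n+1} converges to H_n/(n+1) as the integer D tends to infinity, where H_n = 1 + 1/2 + ⋯ + 1/n. -/

import Mathlib

open Finset Filter

/-- `S(n,D) = Σ_{m=2}^{D} ((m−1)^n − (D−m)^n)·log m`. -/
noncomputable def S (n D : ℕ) : ℝ :=
  ∑ m ∈ Finset.Icc 2 D, (((m : ℝ) - 1) ^ n - ((D : ℝ) - (m : ℝ)) ^ n) * Real.log m

/-- The `n`-th harmonic number `H_n = 1 + 1/2 + ⋯ + 1/n`. -/
noncomputable def H (n : ℕ) : ℝ := ∑ k ∈ Finset.Icc 1 n, (1 : ℝ) / (k : ℝ)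

noncomputable def Lp (i D : ℕ) : ℝ := ∑ m ∈ Finset.Icc 2 D, (m:ℝ)^i * Real.log m

-- I1
lemma I1 (n : ℕ) : ∑ i ∈ range (n+1), (-1:ℝ)^i * (n.choose i) / (i+1) = 1/(n+1) := by
  have key : ∀ i ∈ range (n+1), (-1:ℝ)^i * (n.choose i) / (i+1)
      = (1/(n+1)) * ((-1:ℝ)^i * ((n+1).choose (i+1))) := by
    intro i hi
    have h := Nat.add_one_mul_choose_eq n i
    have h2 : ((n:ℝ)+1) * (n.choose i) = ((n+1).choose (i+1)) * ((i:ℝ)+1) := by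
      exact_mod_cast congrArg (Nat.cast : ℕ → ℝ) h
    have hi1 : ((i:ℝ)+1) ≠ 0 := by positivity
    have hn1 : ((n:ℝ)+1) ≠ 0 := by positivity
    field_simp
    linear_combination h2
  rw [Finset.sum_congr rfl key, ← Finset.mul_sum]
  have halt : ∑ i ∈ range (n+1), (-1:ℝ)^i * ((n+1).choose (i+1)) = 1 := by
    have h0 : ∑ i ∈ range (n+2), (-1:ℝ)^i * ((n+1).choose i) = 0 := by
      have := @Int.alternating_sum_range_choose (n+1)
      rw [if_neg (Nat.succ_ne_zero n)] at this
      exact_mod_cast congrArg (Int.cast : ℤ → ℝ) this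
    rw [Finset.sum_range_succ'] at h0
    simp only [pow_succ, pow_zero, Nat.choose_zero_right, Nat.cast_one, one_mul] at h0
    have : ∑ i ∈ range (n+1), (-1:ℝ)^i * (-1) * ((n+1).choose (i+1)) = -1 := by linarith
    calc ∑ i ∈ range (n+1), (-1:ℝ)^i * ((n+1).choose (i+1))
        = -∑ i ∈ range (n+1), (-1:ℝ)^i * (-1) * ((n+1).choose (i+1)) := by
          rw [← Finset.sum_neg_distrib]; congr 1 with i; ring
      _ = 1 := by rw [this]; ring
  rw [halt, mul_one]

lemma Bharm (m : ℕ) : ∑ j ∈ range m, (-1:ℝ)^j * (m.choose (j+1)) / (j+1) = H m := by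
  induction m with
  | zero => simp [H]
  | succ m ih =>
    have hsplit : ∀ j ∈ range (m+1), (-1:ℝ)^j * ((m+1).choose (j+1)) / (j+1)
        = (-1:ℝ)^j * (m.choose j) / (j+1) + (-1:ℝ)^j * (m.choose (j+1)) / (j+1) := by
      intro j hj
      rw [Nat.choose_succ_succ]
      push_cast
      ring
    rw [Finset.sum_congr rfl hsplit, Finset.sum_add_distrib, I1 m]
    have htail : ∑ j ∈ range (m+1), (-1:ℝ)^j * (m.choose (j+1)) / (j+1)
        = ∑ j ∈ range m, (-1:ℝ)^j * (m.choose (j+1)) / (j+1) := by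
      rw [Finset.sum_range_succ, Nat.choose_succ_self]
      simp
    rw [htail, ih, H, H, Finset.sum_Icc_succ_top (by omega : 1 ≤ m + 1)]
    push_cast
    ring

lemma I2 (n : ℕ) : ∑ i ∈ range (n+1), (-1:ℝ)^i * (n.choose i) / ((i+1)^2) = H (n+1) / (n+1) := by
  have key : ∀ i ∈ range (n+1), (-1:ℝ)^i * (n.choose i) / ((i+1)^2)
      = (1/((n:ℝ)+1)) * ((-1:ℝ)^i * ((n+1).choose (i+1)) / ((i:ℝ)+1)) := by
    intro i hi
    have h := Nat.add_one_mul_choose_eq n i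
    have h2 : ((n:ℝ)+1) * (n.choose i) = ((n+1).choose (i+1)) * ((i:ℝ)+1) := by
      exact_mod_cast congrArg (Nat.cast : ℕ → ℝ) h
    have hi1 : ((i:ℝ)+1) ≠ 0 := by positivity
    have hn1 : ((n:ℝ)+1) ≠ 0 := by positivity
    field_simp
    linear_combination h2
  rw [Finset.sum_congr rfl key, ← Finset.mul_sum]
  have := Bharm (n+1)
  push_cast at this ⊢
  rw [this]
  ring


lemma sub_pow' (x y : ℝ) (n : ℕ) :
    (x - y)^n = ∑ i ∈ range (n+1), (-1:ℝ)^i * x^(n-i) * y^i * (n.choose i) := by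
  rw [sub_pow, ← Finset.sum_range_reflect]
  refine Finset.sum_congr rfl fun i hi => ?_
  rw [Finset.mem_range] at hi
  have hin : i ≤ n := by omega
  have h1 : n + 1 - 1 - i = n - i := by omega
  have h2 : n - (n - i) = i := by omega
  have h3 : n.choose (n - i) = n.choose i := Nat.choose_symm hin
  have h4 : (-1:ℝ)^(n - i + n) = (-1:ℝ)^i := by
    rw [show n - i + n = 2*(n-i) + i by omega, pow_add, pow_mul, neg_one_sq, one_pow, one_mul]
  rw [h1, h2, h3, h4]

lemma main_identity (n D : ℕ) :
    S n D = ∑ i ∈ range (n+1),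
      ((-1:ℝ)^(i+n) - (-1:ℝ)^i * (D:ℝ)^(n-i)) * (n.choose i) * Lp i D := by
  unfold S
  have hterm : ∀ m ∈ Finset.Icc 2 D,
      (((m : ℝ) - 1) ^ n - ((D : ℝ) - (m : ℝ)) ^ n) * Real.log m
      = ∑ i ∈ range (n+1),
          ((-1:ℝ)^(i+n) - (-1:ℝ)^i * (D:ℝ)^(n-i)) * (n.choose i) * ((m:ℝ)^i * Real.log m) := by
    intro m hm
    rw [sub_pow ((m:ℝ)) 1 n, sub_pow' ((D:ℝ)) ((m:ℝ)) n, ← Finset.sum_sub_distrib,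
      Finset.sum_mul]
    refine Finset.sum_congr rfl fun i hi => ?_
    ring
  rw [Finset.sum_congr rfl hterm, Finset.sum_comm]
  refine Finset.sum_congr rfl fun i hi => ?_
  rw [Lp, Finset.mul_sum]


noncomputable def Fi (i : ℕ) (x : ℝ) : ℝ :=
  x^(i+1) * Real.log x / (i+1) - x^(i+1) / ((i:ℝ)+1)^2

lemma Fi_deriv (i : ℕ) {x : ℝ} (hx : 0 < x) :
    HasDerivAt (Fi i) ((x:ℝ)^i * Real.log x) x := by
  have h1 : HasDerivAt (fun x : ℝ => x^(i+1)) (((i:ℝ)+1) * x^i) x := by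
    have := hasDerivAt_pow (i+1) x
    simpa using this
  have hlog : HasDerivAt Real.log (1/x) x := by
    simpa [one_div] using Real.hasDerivAt_log (ne_of_gt hx)
  have h2 : HasDerivAt (fun x : ℝ => x^(i+1) * Real.log x)
      ((((i:ℝ)+1) * x^i) * Real.log x + x^(i+1) * (1/x)) x := h1.mul hlog
  have h3 := (h2.div_const ((i:ℝ)+1)).sub (h1.div_const (((i:ℝ)+1)^2))
  refine (show HasDerivAt (Fi i) _ x from h3).congr_deriv ?_
  have hi : ((i:ℝ)+1) ≠ 0 := by positivity
  field_simp
  ring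

lemma f_contOn (i : ℕ) {b : ℝ} (hb : 1 ≤ b) :
    ContinuousOn (fun x : ℝ => x^i * Real.log x) (Set.uIcc 1 b) := by
  apply (continuous_pow i).continuousOn.mul
  apply Real.continuousOn_log.mono
  intro x hx
  rw [Set.uIcc_of_le hb] at hx
  have : (1:ℝ) ≤ x := hx.1
  simp only [Set.mem_compl_iff, Set.mem_singleton_iff]
  intro h; rw [h] at this; linarith

lemma Fi_integral (i : ℕ) {b : ℝ} (hb : 1 ≤ b) :
    ∫ x in (1:ℝ)..b, x^i * Real.log x = Fi i b - Fi i 1 := by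
  apply intervalIntegral.integral_eq_sub_of_hasDerivAt
  · intro x hx
    rw [Set.uIcc_of_le hb] at hx
    exact Fi_deriv i (lt_of_lt_of_le zero_lt_one hx.1)
  · exact (f_contOn i hb).intervalIntegrable

lemma f_mono (i : ℕ) (b : ℝ) :
    MonotoneOn (fun x : ℝ => x^i * Real.log x) (Set.Icc 1 b) := by
  intro x hx y hy hxy
  have hx1 : (1:ℝ) ≤ x := hx.1
  have hy1 : (1:ℝ) ≤ y := hy.1
  dsimp only
  apply mul_le_mul (pow_le_pow_left₀ (by linarith) hxy i)
    (Real.log_le_log (by linarith) hxy) (Real.log_nonneg hx1)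
    (pow_nonneg (by linarith) i)

lemma Lp_eq_sum_Ico (i D : ℕ) :
    Lp i D = ∑ x ∈ Finset.Ico 1 D, ((x+1 : ℕ) : ℝ)^i * Real.log ((x+1 : ℕ) : ℝ) := by
  rw [Lp]
  apply Finset.sum_nbij' (fun m => m - 1) (fun x => x + 1)
  · intro m hm; rw [Finset.mem_Icc] at hm; rw [Finset.mem_Ico]; omega
  · intro x hx; rw [Finset.mem_Ico] at hx; rw [Finset.mem_Icc]; omega
  · intro m hm; rw [Finset.mem_Icc] at hm; omega
  · intro x hx; omega
  · intro m hm; rw [Finset.mem_Icc] at hm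
    have : m - 1 + 1 = m := by omega
    rw [this]

lemma Lp_eq_sum_Ico' (i D : ℕ) (hD : 1 ≤ D) :
    Lp i D = (∑ x ∈ Finset.Ico 1 D, (x : ℝ)^i * Real.log (x : ℝ)) + (D:ℝ)^i * Real.log D := by
  have h1 : ∑ x ∈ Finset.Icc 1 D, (x : ℝ)^i * Real.log (x : ℝ) = Lp i D := by
    rw [Lp]
    rw [show Finset.Icc 2 D = Finset.Ioc 1 D from Finset.Icc_add_one_left_eq_Ioc 1 D,
      ← Finset.Ioc_insert_left hD]
    rw [Finset.sum_insert (by simp)]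
    simp
  have h2 : Finset.Icc 1 D = insert D (Finset.Ico 1 D) := (Finset.Ico_insert_right hD).symm
  rw [← h1, h2, Finset.sum_insert (by simp)]
  ring

lemma Lp_lower (i D : ℕ) (hD : 1 ≤ D) : Fi i D - Fi i 1 ≤ Lp i D := by
  have hcast : ((1:ℕ):ℝ) ≤ ((D:ℕ):ℝ) := by exact_mod_cast hD
  have h := MonotoneOn.integral_le_sum_Ico (f := fun x : ℝ => x^i * Real.log x) hD
    (by simpa using f_mono i (D:ℝ))
  rw [Lp_eq_sum_Ico]
  calc Fi i D - Fi i 1 = ∫ x in ((1:ℕ):ℝ)..((D:ℕ):ℝ), x^i * Real.log x := by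
        rw [Nat.cast_one]; exact (Fi_integral i (by exact_mod_cast hD)).symm
    _ ≤ _ := h
    
lemma Lp_upper (i D : ℕ) (hD : 1 ≤ D) :
    Lp i D ≤ Fi i D - Fi i 1 + (D:ℝ)^i * Real.log D := by
  have h := MonotoneOn.sum_le_integral_Ico (f := fun x : ℝ => x^i * Real.log x) hD
    (by simpa using f_mono i (D:ℝ))
  rw [Lp_eq_sum_Ico' i D hD]
  have hint : (∫ x in ((1:ℕ):ℝ)..((D:ℕ):ℝ), x^i * Real.log x) = Fi i D - Fi i 1 := by
    rw [Nat.cast_one]; exact Fi_integral i (by exact_mod_cast hD)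
  rw [hint] at h
  linarith

lemma tendsto_logx_div : Tendsto (fun x : ℝ => Real.log x / x) atTop (nhds 0) := by
  have := Real.tendsto_pow_log_div_mul_add_atTop 1 0 1 one_ne_zero
  simpa using this

lemma tendsto_natCast : Tendsto (fun D : ℕ => (D:ℝ)) atTop atTop :=
  tendsto_natCast_atTop_atTop

lemma tendsto_inv_pow (k : ℕ) (hk : k ≠ 0) :
    Tendsto (fun D : ℕ => 1 / (D:ℝ)^k) atTop (nhds 0) := by
  simp only [one_div]
  exact ((tendsto_pow_atTop hk).comp tendsto_natCast).inv_tendsto_atTop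

lemma tendsto_log_div_nat : Tendsto (fun D : ℕ => Real.log D / (D:ℝ)) atTop (nhds 0) :=
  tendsto_logx_div.comp tendsto_natCast

lemma tendsto_gLp (i : ℕ) :
    Tendsto (fun D : ℕ => Lp i D / (D:ℝ)^(i+1) - Real.log D / ((i:ℝ)+1)) atTop
      (nhds (-1 / ((i:ℝ)+1)^2)) := by
  have hi1 : ((i:ℝ)+1) ≠ 0 := by positivity
  have hlow : Tendsto (fun D : ℕ => -1/((i:ℝ)+1)^2 + (1/((i:ℝ)+1)^2) * (1/(D:ℝ)^(i+1)))
      atTop (nhds (-1/((i:ℝ)+1)^2)) := by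
    have := ((tendsto_inv_pow (i+1) (Nat.succ_ne_zero i)).const_mul (1/((i:ℝ)+1)^2)).const_add
      (-1/((i:ℝ)+1)^2)
    simpa using this
  have hup : Tendsto (fun D : ℕ => (-1/((i:ℝ)+1)^2 + (1/((i:ℝ)+1)^2) * (1/(D:ℝ)^(i+1)))
      + Real.log D / (D:ℝ)) atTop (nhds (-1/((i:ℝ)+1)^2)) := by
    have := hlow.add tendsto_log_div_nat
    simpa using this
  apply tendsto_of_tendsto_of_tendsto_of_le_of_le' hlow hup
  · filter_upwards [eventually_ge_atTop 1] with D hD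
    have hDpos : (0:ℝ) < (D:ℝ) := by exact_mod_cast hD
    have hpow : (0:ℝ) < (D:ℝ)^(i+1) := by positivity
    have h := Lp_lower i D hD
    have h' : (Fi i D - Fi i 1)/(D:ℝ)^(i+1) ≤ Lp i D / (D:ℝ)^(i+1) :=
      (div_le_div_iff_of_pos_right hpow).mpr h
    have heq : (Fi i (D:ℝ) - Fi i 1)/(D:ℝ)^(i+1)
        = -1/((i:ℝ)+1)^2 + (1/((i:ℝ)+1)^2) * (1/(D:ℝ)^(i+1)) + Real.log D/((i:ℝ)+1) := by
      rw [Fi, Fi, Real.log_one]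
      field_simp
      ring
    rw [heq] at h'
    linarith
  · filter_upwards [eventually_ge_atTop 1] with D hD
    have hDpos : (0:ℝ) < (D:ℝ) := by exact_mod_cast hD
    have hpow : (0:ℝ) < (D:ℝ)^(i+1) := by positivity
    have h := Lp_upper i D hD
    have h' : Lp i D / (D:ℝ)^(i+1) ≤ (Fi i D - Fi i 1 + (D:ℝ)^i * Real.log D)/(D:ℝ)^(i+1) :=
      (div_le_div_iff_of_pos_right hpow).mpr h
    have heq : (Fi i (D:ℝ) - Fi i 1 + (D:ℝ)^i * Real.log D)/(D:ℝ)^(i+1)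
        = -1/((i:ℝ)+1)^2 + (1/((i:ℝ)+1)^2) * (1/(D:ℝ)^(i+1)) + Real.log D/(D:ℝ)
          + Real.log D/((i:ℝ)+1) := by
      rw [Fi, Fi, Real.log_one]
      have hpow' : (D:ℝ)^(i+1) = (D:ℝ)^i * (D:ℝ) := by ring
      field_simp
      ring
    rw [heq] at h'
    linarith

lemma tendsto_log_div_pow (k : ℕ) (hk : 1 ≤ k) :
    Tendsto (fun D : ℕ => Real.log D / (D:ℝ)^k) atTop (nhds 0) := by
  apply tendsto_of_tendsto_of_tendsto_of_le_of_le' tendsto_const_nhds tendsto_log_div_nat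
  · filter_upwards [eventually_ge_atTop 1] with D hD
    have hD1 : (1:ℝ) ≤ (D:ℝ) := by exact_mod_cast hD
    positivity
  · filter_upwards [eventually_ge_atTop 1] with D hD
    have hD1 : (1:ℝ) ≤ (D:ℝ) := by exact_mod_cast hD
    apply div_le_div_of_nonneg_left (Real.log_nonneg hD1) (by linarith)
    calc (D:ℝ) = (D:ℝ)^1 := (pow_one _).symm
      _ ≤ (D:ℝ)^k := pow_le_pow_right₀ hD1 hk

lemma tendsto_Lp_div (i n : ℕ) (hin : i < n) :
    Tendsto (fun D : ℕ => Lp i D / (D:ℝ)^(n+1)) atTop (nhds 0) := by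
  have h1 : Tendsto (fun D : ℕ =>
      (Lp i D / (D:ℝ)^(i+1) - Real.log D / ((i:ℝ)+1)) * (1/(D:ℝ)^(n-i))
      + (1/((i:ℝ)+1)) * (Real.log D / (D:ℝ)^(n-i))) atTop (nhds 0) := by
    have ha := (tendsto_gLp i).mul (tendsto_inv_pow (n-i) (by omega))
    have hb := (tendsto_log_div_pow (n-i) (by omega)).const_mul (1/((i:ℝ)+1))
    have := ha.add hb
    simpa using this
  apply h1.congr'
  filter_upwards [eventually_ge_atTop 1] with D hD
  have hDpos : (0:ℝ) < (D:ℝ) := by exact_mod_cast hD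
  have hsplit : (D:ℝ)^(n+1) = (D:ℝ)^(i+1) * (D:ℝ)^(n-i) := by
    rw [← pow_add]; congr 1; omega
  have hpow1 : (0:ℝ) < (D:ℝ)^(i+1) := by positivity
  have hpow2 : (0:ℝ) < (D:ℝ)^(n-i) := by positivity
  field_simp
  rw [hsplit]
  ring

theorem stmt_14 (n : ℕ) (hn : 1 ≤ n) :
    Filter.Tendsto (fun D : ℕ => S n D / (D : ℝ) ^ (n + 1)) Filter.atTop
      (nhds (H n / ((n : ℝ) + 1))) := by
  set G : ℕ → ℝ := fun D =>
    (∑ i ∈ range n, (-1:ℝ)^(i+n) * (n.choose i) * (Lp i D / (D:ℝ)^(n+1)))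
    + (Lp n D / (D:ℝ)^(n+1) - Real.log D / ((n:ℝ)+1))
    - ∑ i ∈ range (n+1), (-1:ℝ)^i * (n.choose i)
        * (Lp i D / (D:ℝ)^(i+1) - Real.log D / ((i:ℝ)+1)) with hG
  have hlim : Tendsto G atTop (nhds (H n / ((n:ℝ)+1))) := by
    have h1 : Tendsto (fun D : ℕ => ∑ i ∈ range n,
        (-1:ℝ)^(i+n) * (n.choose i) * (Lp i D / (D:ℝ)^(n+1))) atTop (nhds 0) := by
      have := tendsto_finset_sum (range n) (fun i hi =>
        (tendsto_Lp_div i n (mem_range.mp hi)).const_mul ((-1:ℝ)^(i+n) * (n.choose i)))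
      simpa using this
    have h2 := tendsto_gLp n
    have h3 : Tendsto (fun D : ℕ => ∑ i ∈ range (n+1), (-1:ℝ)^i * (n.choose i)
        * (Lp i D / (D:ℝ)^(i+1) - Real.log D / ((i:ℝ)+1))) atTop
        (nhds (∑ i ∈ range (n+1), (-1:ℝ)^i * (n.choose i) * (-1 / ((i:ℝ)+1)^2))) :=
      tendsto_finset_sum _ (fun i hi => (tendsto_gLp i).const_mul _)
    have hval : ∑ i ∈ range (n+1), (-1:ℝ)^i * (n.choose i) * (-1 / ((i:ℝ)+1)^2)
        = -(H (n+1) / ((n:ℝ)+1)) := by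
      rw [← I2 n, ← Finset.sum_neg_distrib]
      refine Finset.sum_congr rfl fun i hi => ?_
      have : ((i:ℝ)+1) ≠ 0 := by positivity
      field_simp
    rw [hval] at h3
    have := (h1.add h2).sub h3
    have hfin : (0 + -1 / ((n:ℝ)+1)^2) - -(H (n+1) / ((n:ℝ)+1)) = H n / ((n:ℝ)+1) := by
      rw [H, H, Finset.sum_Icc_succ_top (by omega : 1 ≤ n + 1)]
      have hn1 : ((n:ℝ)+1) ≠ 0 := by positivity
      push_cast
      field_simp
      ring
    rw [hfin] at this
    exact this
  apply hlim.congr'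
  filter_upwards [eventually_ge_atTop 1] with D hD
  have hDpos : (0:ℝ) < (D:ℝ) := by exact_mod_cast hD
  rw [hG, main_identity, Finset.sum_div]
  have hterm : ∀ i ∈ range (n+1),
      ((-1:ℝ)^(i+n) - (-1:ℝ)^i * (D:ℝ)^(n-i)) * (n.choose i) * Lp i D / (D:ℝ)^(n+1)
      = (-1:ℝ)^(i+n) * (n.choose i) * (Lp i D / (D:ℝ)^(n+1))
        - (-1:ℝ)^i * (n.choose i) * (Lp i D / (D:ℝ)^(i+1)) := by
    intro i hi
    rw [mem_range] at hi
    have hpows : (D:ℝ)^(n+1) = (D:ℝ)^(n-i) * (D:ℝ)^(i+1) := by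
      rw [← pow_add]; congr 1; omega
    have h1 : (0:ℝ) < (D:ℝ)^(i+1) := by positivity
    have h2 : (0:ℝ) < (D:ℝ)^(n-i) := by positivity
    rw [hpows]
    field_simp
  rw [Finset.sum_congr rfl hterm, Finset.sum_sub_distrib, Finset.sum_range_succ]
  have hcoef : (-1:ℝ)^(n+n) * ((n.choose n : ℕ) : ℝ) = 1 := by
    rw [Nat.choose_self, show n+n = 2*n by omega, pow_mul, neg_one_sq, one_pow]
    norm_num
  have hsecond : ∑ i ∈ range (n+1), (-1:ℝ)^i * (n.choose i) * (Lp i D / (D:ℝ)^(i+1))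
      = (∑ i ∈ range (n+1), (-1:ℝ)^i * (n.choose i)
          * (Lp i D / (D:ℝ)^(i+1) - Real.log D / ((i:ℝ)+1))) + Real.log D / ((n:ℝ)+1) := by
    simp only [mul_sub]
    rw [Finset.sum_sub_distrib]
    have : ∑ i ∈ range (n+1), (-1:ℝ)^i * (n.choose i) * (Real.log D / ((i:ℝ)+1))
        = Real.log D / ((n:ℝ)+1) := by
      have := I1 n
      calc ∑ i ∈ range (n+1), (-1:ℝ)^i * (n.choose i) * (Real.log D / ((i:ℝ)+1))
          = Real.log D * ∑ i ∈ range (n+1), (-1:ℝ)^i * (n.choose i) / ((i:ℝ)+1) := by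
            rw [Finset.mul_sum]
            refine Finset.sum_congr rfl fun i hi => ?_
            push_cast
            ring
        _ = Real.log D * (1/((n:ℝ)+1)) := by rw_mod_cast [this]
        _ = Real.log D / ((n:ℝ)+1) := by ring
    rw [this]
    ring
  rw [hsecond, hcoef]
  push_cast
  ring
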